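/- Let $k$ be a field with $\mathrm{char}(k) \neq 2$. Identify $B = k[[x,y]]/(y^2-x^4)$ with the subalgebra of $k[[t]]\times k[[t]]$ of pairs agreeing up to degree 1. Then the subset $A \subseteq B$ of pairs of the form $(p(t), p(0))$ with $p'(0) = 0$ is a $k$-subalgebra, and $A$ is isomorphic to $k[[x,y]]/(y^2 - x^3)$ (a cusp, i.e. an $A_2$-singularity), via the map sending $x \mapsto \frac{y+x^2}{2}$ and $y \mapsto \frac{x(y+x^2)}{2}$ in $B$. -/

import Mathlib

set_option synthInstance.maxHeartbeats 1000000
set_option maxHeartbeats 1000000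

namespace Stmt9Aux

open Finset MvPowerSeries

variable {k : Type*} [CommRing k]

noncomputable def fe (p : ℕ × ℕ) : Fin 2 →₀ ℕ := Finsupp.single 0 p.1 + Finsupp.single 1 p.2

@[simp] lemma fe_zero (p : ℕ × ℕ) : fe p 0 = p.1 := by
  simp [fe, Finsupp.single_apply]

@[simp] lemma fe_one (p : ℕ × ℕ) : fe p 1 = p.2 := by
  simp [fe, Finsupp.single_apply]

lemma finsupp_ext {d e : Fin 2 →₀ ℕ} (h0 : d 0 = e 0) (h1 : d 1 = e 1) : d = e := by
  ext a; fin_cases a <;> assumption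

lemma eq_fe (d : Fin 2 →₀ ℕ) : d = fe (d 0, d 1) := finsupp_ext (by simp) (by simp)

lemma fe_inj : Function.Injective fe := fun p q h =>
  Prod.ext (by rw [← fe_zero p, h, fe_zero]) (by rw [← fe_one p, h, fe_one])

noncomputable def S (n : ℕ) : Finset (Fin 2 →₀ ℕ) :=
  ((range (n+1) ×ˢ range (n+1)).filter (fun p => 2 * p.1 + 3 * p.2 = n)).map ⟨fe, fe_inj⟩

lemma mem_S {n : ℕ} {d : Fin 2 →₀ ℕ} : d ∈ S n ↔ 2 * d 0 + 3 * d 1 = n := by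
  simp only [S, mem_map, mem_filter, mem_product, mem_range, Function.Embedding.coeFn_mk]
  constructor
  · rintro ⟨p, ⟨_, hp⟩, rfl⟩; simpa using hp
  · intro h
    exact ⟨(d 0, d 1), ⟨⟨by omega, by omega⟩, by simpa using h⟩, (eq_fe d).symm⟩

noncomputable def psiFun (f : MvPowerSeries (Fin 2) k) : PowerSeries k :=
  PowerSeries.mk fun n => ∑ d ∈ S n, coeff d f

lemma coeff_psiFun (f : MvPowerSeries (Fin 2) k) (n : ℕ) :
    PowerSeries.coeff n (psiFun f) = ∑ d ∈ S n, coeff d f :=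
  PowerSeries.coeff_mk _ _

lemma wadd (a b : Fin 2 →₀ ℕ) :
    2 * (a + b) 0 + 3 * (a + b) 1 = (2 * a 0 + 3 * a 1) + (2 * b 0 + 3 * b 1) := by
  simp [Finsupp.add_apply]; ring

lemma psiFun_mul (f g : MvPowerSeries (Fin 2) k) :
    psiFun (f * g) = psiFun f * psiFun g := by
  ext n
  rw [PowerSeries.coeff_mul]
  simp only [psiFun, PowerSeries.coeff_mk, MvPowerSeries.coeff_mul, sum_mul_sum,
    ← Finset.sum_product']
  rw [Finset.sum_sigma', Finset.sum_sigma']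
  refine Finset.sum_nbij' (fun x => ⟨(2 * x.2.1 0 + 3 * x.2.1 1, 2 * x.2.2 0 + 3 * x.2.2 1), x.2⟩)
    (fun y => ⟨y.2.1 + y.2.2, y.2⟩) ?_ ?_ ?_ ?_ ?_
  · rintro ⟨d, a, b⟩ hx
    simp only [mem_sigma, mem_S, HasAntidiagonal.mem_antidiagonal] at hx ⊢
    obtain ⟨hd, hab⟩ := hx
    refine ⟨?_, ?_⟩
    · rw [← hd, ← hab]; exact (wadd a b).symm
    · rw [mem_product]; exact ⟨mem_S.mpr rfl, mem_S.mpr rfl⟩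
  · rintro ⟨⟨p, q⟩, a, b⟩ hy
    simp only [mem_sigma, HasAntidiagonal.mem_antidiagonal, mem_product, mem_S] at hy
    obtain ⟨hpq, ha, hb⟩ := hy
    simp only [mem_sigma, mem_S, HasAntidiagonal.mem_antidiagonal]
    exact ⟨by rw [wadd, ha, hb, hpq], trivial⟩
  · rintro ⟨d, a, b⟩ hx
    rw [mem_sigma, HasAntidiagonal.mem_antidiagonal] at hx
    simp only [hx.2]
  · rintro ⟨⟨p, q⟩, a, b⟩ hy
    simp only [mem_sigma, HasAntidiagonal.mem_antidiagonal, mem_product, mem_S] at hy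
    obtain ⟨hpq, ha, hb⟩ := hy
    simp only [ha, hb]
  · rintro ⟨d, a, b⟩ _
    rfl

lemma psiFun_C (c : k) : psiFun (MvPowerSeries.C c) = PowerSeries.C c := by
  ext n
  rw [coeff_psiFun]
  have : ∀ d ∈ S n, coeff d (MvPowerSeries.C c) =
      if d = 0 then c else 0 := by
    intro d _; classical rw [MvPowerSeries.coeff_C]
  rw [Finset.sum_congr rfl this, Finset.sum_ite_eq' (S n) 0 (fun _ => c)]
  rw [PowerSeries.coeff_C]
  have h0 : (0 : Fin 2 →₀ ℕ) ∈ S n ↔ n = 0 := by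
    rw [mem_S]; simp [eq_comm]
  split_ifs with h h' h' <;> simp_all

noncomputable def psi : MvPowerSeries (Fin 2) k →ₐ[k] PowerSeries k where
  toFun := psiFun
  map_one' := by
    have := psiFun_C (1 : k); rwa [map_one, map_one] at this
  map_mul' := psiFun_mul
  map_zero' := by ext n; simp [psiFun]
  map_add' f g := by
    ext n; simp [psiFun, ← Finset.sum_add_distrib]
  commutes' c := by
    have := psiFun_C c
    rwa [MvPowerSeries.c_eq_algebraMap] at this

lemma coeff_psi (f : MvPowerSeries (Fin 2) k) (n : ℕ) :
    PowerSeries.coeff n (psi f) = ∑ d ∈ S n, coeff d f :=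
  coeff_psiFun f n

lemma psi_X0 : psi (X 0 : MvPowerSeries (Fin 2) k) = PowerSeries.X ^ 2 := by
  ext n
  rw [coeff_psi, PowerSeries.coeff_X_pow]
  classical
  have : ∀ d ∈ S n, coeff d (X 0 : MvPowerSeries (Fin 2) k) =
      if d = Finsupp.single 0 1 then 1 else 0 := fun d _ => MvPowerSeries.coeff_X d 0
  rw [Finset.sum_congr rfl this, Finset.sum_ite_eq' (S n) _ (fun _ => (1:k))]
  have : (Finsupp.single 0 1 : Fin 2 →₀ ℕ) ∈ S n ↔ n = 2 := by
    rw [mem_S]; simp [Finsupp.single_apply, eq_comm]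
  split_ifs with h h' h' <;> simp_all

lemma psi_X1 : psi (X 1 : MvPowerSeries (Fin 2) k) = PowerSeries.X ^ 3 := by
  ext n
  rw [coeff_psi, PowerSeries.coeff_X_pow]
  classical
  have : ∀ d ∈ S n, coeff d (X 1 : MvPowerSeries (Fin 2) k) =
      if d = Finsupp.single 1 1 then 1 else 0 := fun d _ => MvPowerSeries.coeff_X d 1
  rw [Finset.sum_congr rfl this, Finset.sum_ite_eq' (S n) _ (fun _ => (1:k))]
  have : (Finsupp.single 1 1 : Fin 2 →₀ ℕ) ∈ S n ↔ n = 3 := by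
    rw [mem_S]; simp [Finsupp.single_apply, eq_comm]
  split_ifs with h h' h' <;> simp_all

lemma coeff_one_psi (f : MvPowerSeries (Fin 2) k) :
    PowerSeries.coeff 1 (psi f) = 0 := by
  rw [coeff_psi]
  refine Finset.sum_eq_zero fun d hd => absurd (mem_S.mp hd) (by omega)

lemma psi_coeff_even (g : MvPowerSeries (Fin 2) k)
    (hg : ∀ d : Fin 2 →₀ ℕ, 2 ≤ d 1 → coeff d g = 0) (m : ℕ) :
    PowerSeries.coeff (2*m) (psi g) = coeff (fe (m, 0)) g := by
  rw [coeff_psi]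
  refine Finset.sum_eq_single _ ?_ ?_
  · intro b hb hne
    rw [mem_S] at hb
    by_cases h2 : 2 ≤ b 1
    · exact hg b h2
    · exfalso
      have h1 : b 1 = 0 := by omega
      have h0 : b 0 = m := by omega
      exact hne (finsupp_ext (by simp [h0]) (by simp [h1]))
  · intro h; exact absurd (mem_S.mpr (by simp)) h

lemma psi_coeff_odd (g : MvPowerSeries (Fin 2) k)
    (hg : ∀ d : Fin 2 →₀ ℕ, 2 ≤ d 1 → coeff d g = 0) (m : ℕ) :
    PowerSeries.coeff (2*m+3) (psi g) = coeff (fe (m, 1)) g := by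
  rw [coeff_psi]
  refine Finset.sum_eq_single _ ?_ ?_
  · intro b hb hne
    rw [mem_S] at hb
    by_cases h2 : 2 ≤ b 1
    · exact hg b h2
    · exfalso
      have h1 : b 1 = 1 := by omega
      have h0 : b 0 = m := by omega
      exact hne (finsupp_ext (by simp [h0]) (by simp [h1]))
  · intro h; exact absurd (mem_S.mpr (by simp)) h


noncomputable def qf (f : MvPowerSeries (Fin 2) k) : MvPowerSeries (Fin 2) k :=
  fun d => ∑ i ∈ range (d 0 / 3 + 1), coeff (fe (d 0 - 3*i, d 1 + 2*i + 2)) f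

noncomputable def Rf (f : MvPowerSeries (Fin 2) k) : MvPowerSeries (Fin 2) k :=
  fun d => if d 1 ≤ 1 then ∑ j ∈ range (d 0 / 3 + 1), coeff (fe (d 0 - 3*j, d 1 + 2*j)) f
    else 0

lemma coeff_qf (f : MvPowerSeries (Fin 2) k) (e : Fin 2 →₀ ℕ) :
    coeff e (qf f) = ∑ i ∈ range (e 0 / 3 + 1), coeff (fe (e 0 - 3*i, e 1 + 2*i + 2)) f :=
  rfl

lemma coeff_Rf (f : MvPowerSeries (Fin 2) k) (e : Fin 2 →₀ ℕ) :
    coeff e (Rf f) = if e 1 ≤ 1 then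
      ∑ j ∈ range (e 0 / 3 + 1), coeff (fe (e 0 - 3*j, e 1 + 2*j)) f else 0 :=
  rfl

lemma tele (m : ℕ) (g : ℕ → k) :
    ∑ i ∈ range (m/3+1), g i =
      g 0 + (if 3 ≤ m then ∑ i ∈ range ((m-3)/3+1), g (i+1) else 0) := by
  rcases lt_or_ge m 3 with h | h
  · rw [Nat.div_eq_of_lt h, if_neg (not_le.mpr h)]
    simp
  · rw [if_pos h]
    have h3 : m / 3 = (m-3)/3 + 1 := by
      conv_lhs => rw [show m = (m-3)+3 by omega]
      rw [Nat.add_div_right _ (by norm_num)]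
    rw [h3, Finset.sum_range_succ']
    exact add_comm _ _

lemma main_id (f : MvPowerSeries (Fin 2) k) :
    f = qf f * (X 1 ^ 2 - X 0 ^ 3) + Rf f := by
  classical
  ext d
  rw [map_add, mul_sub, map_sub, X_pow_eq, X_pow_eq, coeff_mul_monomial, coeff_mul_monomial]
  have hle1 : (Finsupp.single 1 2 ≤ d) ↔ 2 ≤ d 1 := Finsupp.single_le_iff
  have hle0 : (Finsupp.single 0 3 ≤ d) ↔ 3 ≤ d 0 := Finsupp.single_le_iff
  have hq0 : 3 ≤ d 0 → coeff (d - Finsupp.single 0 3) (qf f) =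
      ∑ i ∈ range ((d 0 - 3)/3+1), coeff (fe (d 0 - 3*(i+1), d 1 + 2*(i+1))) f := by
    intro h3
    have e0 : (d - Finsupp.single 0 3 : Fin 2 →₀ ℕ) 0 = d 0 - 3 := by
      simp [Finsupp.tsub_apply, Finsupp.single_apply]
    have e1 : (d - Finsupp.single 0 3 : Fin 2 →₀ ℕ) 1 = d 1 := by
      simp [Finsupp.tsub_apply, Finsupp.single_apply]
    rw [coeff_qf, e0, e1]
    refine Finset.sum_congr rfl fun i _ => ?_
    exact congrArg (fun p => coeff (fe p) f) (Prod.ext (by omega) (by omega))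
  have hA : fe (d 0 - 3*0, d 1 + 2*0) = d := by
    rw [Nat.mul_zero, Nat.sub_zero, Nat.add_zero]
    exact (eq_fe d).symm
  by_cases h2 : 2 ≤ d 1
  · have hRf0 : coeff d (Rf f) = 0 := by
      rw [coeff_Rf, if_neg (by omega)]
    have hq1 : coeff (d - Finsupp.single 1 2) (qf f) =
        ∑ i ∈ range (d 0 / 3 + 1), coeff (fe (d 0 - 3*i, d 1 + 2*i)) f := by
      have e0 : (d - Finsupp.single 1 2 : Fin 2 →₀ ℕ) 0 = d 0 := by
        simp [Finsupp.tsub_apply, Finsupp.single_apply]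
      have e1 : (d - Finsupp.single 1 2 : Fin 2 →₀ ℕ) 1 = d 1 - 2 := by
        simp [Finsupp.tsub_apply, Finsupp.single_apply]
      rw [coeff_qf, e0, e1]
      refine Finset.sum_congr rfl fun i _ => ?_
      exact congrArg (fun p => coeff (fe p) f) (Prod.ext (by omega) (by omega))
    rw [if_pos (hle1.mpr h2), hRf0, hq1,
      tele (d 0) (fun i => coeff (fe (d 0 - 3*i, d 1 + 2*i)) f)]
    by_cases h3 : 3 ≤ d 0
    · rw [if_pos (hle0.mpr h3), hq0 h3, if_pos h3, hA]
      ring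
    · rw [if_neg (fun hc => h3 (hle0.mp hc)), if_neg h3, hA]
      ring
  · have hRf : coeff d (Rf f) =
        ∑ j ∈ range (d 0 / 3 + 1), coeff (fe (d 0 - 3*j, d 1 + 2*j)) f := by
      rw [coeff_Rf, if_pos (by omega)]
    rw [if_neg (fun hc => h2 (hle1.mp hc)), hRf,
      tele (d 0) (fun i => coeff (fe (d 0 - 3*i, d 1 + 2*i)) f)]
    by_cases h3 : 3 ≤ d 0
    · rw [if_pos (hle0.mpr h3), hq0 h3, if_pos h3, hA]
      ring
    · rw [if_neg (fun hc => h3 (hle0.mp hc)), if_neg h3, hA]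
      ring

lemma psi_rel : psi ((X 1 : MvPowerSeries (Fin 2) k) ^ 2 - X 0 ^ 3) = 0 := by
  rw [map_sub, map_pow, map_pow, psi_X0, psi_X1]
  ring

lemma Rf_lowsupp (f : MvPowerSeries (Fin 2) k) :
    ∀ d : Fin 2 →₀ ℕ, 2 ≤ d 1 → coeff d (Rf f) = 0 := fun d hd => by
  rw [coeff_Rf, if_neg (by omega)]

lemma ker_psi_sub (f : MvPowerSeries (Fin 2) k) (hf : psi f = 0) :
    f ∈ Ideal.span {(X 1 : MvPowerSeries (Fin 2) k) ^ 2 - X 0 ^ 3} := by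
  have hid := main_id f
  have hR : psi (Rf f) = 0 := by
    have h2 := congrArg psi hid
    rw [map_add, map_mul, psi_rel, mul_zero, zero_add, hf] at h2
    exact h2.symm
  have hR0 : Rf f = 0 := by
    ext d
    rw [map_zero]
    by_cases h1 : d 1 ≤ 1
    · have hd : d 1 = 0 ∨ d 1 = 1 := by omega
      rcases hd with h | h
      · have he := psi_coeff_even (Rf f) (Rf_lowsupp f) (d 0)
        rw [hR, map_zero] at he
        rw [show d = fe (d 0, 0) from finsupp_ext (by simp) (by simp [h]), ← he]
      · have he := psi_coeff_odd (Rf f) (Rf_lowsupp f) (d 0)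
        rw [hR, map_zero] at he
        rw [show d = fe (d 0, 1) from finsupp_ext (by simp) (by simp [h]), ← he]
    · rw [coeff_Rf, if_neg h1]
  rw [Ideal.mem_span_singleton]
  refine ⟨qf f, ?_⟩
  conv_lhs => rw [hid]
  rw [hR0, add_zero, mul_comm]

noncomputable def pre (p : PowerSeries k) : MvPowerSeries (Fin 2) k :=
  fun d => if d 1 = 0 then PowerSeries.coeff (2 * d 0) p
    else if d 1 = 1 then PowerSeries.coeff (2 * d 0 + 3) p else 0

lemma coeff_pre (p : PowerSeries k) (d : Fin 2 →₀ ℕ) :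
    coeff d (pre p) = if d 1 = 0 then PowerSeries.coeff (2 * d 0) p
      else if d 1 = 1 then PowerSeries.coeff (2 * d 0 + 3) p else 0 :=
  rfl

lemma pre_lowsupp (p : PowerSeries k) :
    ∀ d : Fin 2 →₀ ℕ, 2 ≤ d 1 → coeff d (pre p) = 0 := fun d hd => by
  rw [coeff_pre, if_neg (by omega), if_neg (by omega)]

lemma psi_pre (p : PowerSeries k) (hp : PowerSeries.coeff 1 p = 0) : psi (pre p) = p := by
  ext N
  rcases Nat.even_or_odd N with ⟨m, hm⟩ | ⟨m, hm⟩
  · have hN : N = 2 * m := by omega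
    rw [hN, psi_coeff_even _ (pre_lowsupp p), coeff_pre]
    simp
  · rcases m with _ | m'
    · have hN : N = 1 := by omega
      rw [hN, coeff_one_psi, hp]
    · have hN : N = 2 * m' + 3 := by omega
      rw [hN, psi_coeff_odd _ (pre_lowsupp p), coeff_pre]
      simp

end Stmt9Aux

/-- The subalgebra of `k[[t]] × k[[t]]` of pairs of the form `(p(t), p(0))` with
`p'(0) = 0` (sitting inside the tacnode algebra of pairs agreeing up to degree 1). -/
def cuspInTacnode (k : Type*) [CommRing k] :
    Subalgebra k (PowerSeries k × PowerSeries k) where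
  carrier := {x | x.2 = PowerSeries.C (PowerSeries.constantCoeff x.1) ∧
    PowerSeries.coeff 1 x.1 = 0}
  mul_mem' := by
    rintro a b ⟨ha1, ha2⟩ ⟨hb1, hb2⟩
    constructor
    · simp only [Prod.snd_mul, Prod.fst_mul, ha1, hb1, map_mul]
    · simp only [Prod.fst_mul, PowerSeries.coeff_one_mul, ha2, hb2, zero_mul, add_zero]
  one_mem' := by simp
  add_mem' := by
    rintro a b ⟨ha1, ha2⟩ ⟨hb1, hb2⟩
    constructor
    · simp only [Prod.snd_add, Prod.fst_add, ha1, hb1, map_add]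
    · simp only [Prod.fst_add, map_add, ha2, hb2, add_zero]
  zero_mem' := by simp
  algebraMap_mem' := by
    intro c
    refine ⟨?_, ?_⟩ <;> simp [PowerSeries.algebraMap_apply]

namespace Stmt9Aux

variable {k : Type*} [CommRing k]

noncomputable def phi : MvPowerSeries (Fin 2) k →ₐ[k] (PowerSeries k × PowerSeries k) :=
  { toRingHom := (RingHom.prod (RingHom.id (PowerSeries k))
      ((PowerSeries.C).comp (PowerSeries.constantCoeff))).comp psi.toRingHom
    commutes' := fun c => by
      simp only [RingHom.coe_comp, Function.comp_apply, AlgHom.toRingHom_eq_coe,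
        RingHom.coe_coe, AlgHom.commutes]
      ext <;> simp [PowerSeries.algebraMap_apply] }

lemma phi_apply (f : MvPowerSeries (Fin 2) k) :
    phi f = (psi f, PowerSeries.C (PowerSeries.constantCoeff (psi f))) := rfl

lemma phi_mem (f : MvPowerSeries (Fin 2) k) : phi f ∈ cuspInTacnode k :=
  ⟨rfl, coeff_one_psi f⟩

noncomputable def phi' : MvPowerSeries (Fin 2) k →ₐ[k] cuspInTacnode k :=
  AlgHom.codRestrict phi (cuspInTacnode k) phi_mem

lemma phi'_surj : Function.Surjective (phi' (k := k)) := by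
  rintro ⟨⟨p, s⟩, hp1, hp2⟩
  refine ⟨pre p, ?_⟩
  apply Subtype.ext
  show phi (pre p) = (p, s)
  rw [phi_apply, psi_pre p hp2]
  exact Prod.ext rfl (by rw [hp1])

lemma ker_phi' : Ideal.span {(MvPowerSeries.X 1 : MvPowerSeries (Fin 2) k) ^ 2 -
    (MvPowerSeries.X 0) ^ 3} = RingHom.ker (phi' (k := k)) := by
  apply le_antisymm
  · rw [Ideal.span_le, Set.singleton_subset_iff]
    show phi' _ = 0
    apply Subtype.ext
    show phi _ = 0
    rw [phi_apply, psi_rel]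
    simp
  · intro f hf
    apply ker_psi_sub
    have h0 : phi f = 0 := congrArg Subtype.val (RingHom.mem_ker.mp hf)
    rw [phi_apply, Prod.ext_iff] at h0
    exact h0.1

end Stmt9Aux

/-- inside the tacnode algebra `B` (pairs agreeing up to degree 1), the subset
of pairs `(p(t), p(0))` with `p'(0) = 0` is a `k`-subalgebra, contained in `B`, and it is
isomorphic to the cusp algebra `k[[x,y]]/(y² - x³)` (char `k ≠ 2`). -/
theorem stmt_9 (k : Type*) [Field k] (hchar : (2 : k) ≠ 0) :
    (∀ x ∈ cuspInTacnode k,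
      x.1 - x.2 ∈ Ideal.span {(PowerSeries.X : PowerSeries k) ^ 2}) ∧
    Nonempty ((MvPowerSeries (Fin 2) k ⧸
        Ideal.span {(MvPowerSeries.X 1 : MvPowerSeries (Fin 2) k) ^ 2 -
          (MvPowerSeries.X 0) ^ 3}) ≃ₐ[k] cuspInTacnode k) := by

  constructor
  · rintro ⟨p, s⟩ ⟨h1, h2⟩
    rw [Ideal.mem_span_singleton, PowerSeries.X_pow_dvd_iff]
    intro m hm
    simp only at h1 h2
    interval_cases m
    · subst h1; simp
    · subst h1; simp [h2, PowerSeries.coeff_C]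
  · rw [Stmt9Aux.ker_phi']
    exact ⟨Ideal.quotientKerAlgEquivOfSurjective Stmt9Aux.phi'_surj⟩
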